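/- arXiv:1604.08717 — 2 statements merged into one kernel-verified Lean document; each statement's English description precedes it below -/
import Mathlib

section
/- Let N, Q ≥ 1 be real numbers and let (z_n) be complex numbers. Then |Σ_{N < n ≤ 2N} z_n|² ≤ (2 + N/Q) · Σ_{|q| < Q} (1 − |q|/Q) · Σ_{n : N < n+q ≤ 2N, N < n−q ≤ 2N} z_{n+q} · conj(z_{n−q}), where q runs over integers with |q| < Q. -/
private lemma sum_shift (f : ℤ → ℂ) (u v d : ℤ) :
    ∑ m ∈ Finset.Icc u v, f (m + d) = ∑ n ∈ Finset.Icc (u + d) (v + d), f n := by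
  rw [← Finset.map_add_right_Icc u v d, Finset.sum_map]
  rfl

private lemma sum_reflect (f : ℤ → ℂ) (u v w : ℤ) :
    ∑ m ∈ Finset.Icc u v, f (w - m) = ∑ n ∈ Finset.Icc (w - v) (w - u), f n := by
  refine Finset.sum_nbij' (fun m => w - m) (fun n => w - n) ?_ ?_ ?_ ?_ ?_
  · intro a ha; simp only [Finset.mem_Icc] at *; omega
  · intro a ha; simp only [Finset.mem_Icc] at *; omega
  · intro a _; omega
  · intro a _; omega
  · intro a _; rfl

private lemma cauchy_sq (s : Finset ℤ) (f : ℤ → ℂ) :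
    ‖∑ m ∈ s, f m‖ ^ 2 ≤ (s.card : ℝ) * ∑ m ∈ s, ‖f m‖ ^ 2 := by
  calc ‖∑ m ∈ s, f m‖ ^ 2 ≤ (∑ m ∈ s, ‖f m‖) ^ 2 := by
        apply pow_le_pow_left₀ (norm_nonneg _) (norm_sum_le s f)
    _ = (∑ m ∈ s, 1 * ‖f m‖) ^ 2 := by simp
    _ ≤ (∑ m ∈ s, (1:ℝ) ^ 2) * ∑ m ∈ s, ‖f m‖ ^ 2 :=
        Finset.sum_mul_sq_le_sq_mul_sq s 1 _
    _ = (s.card : ℝ) * ∑ m ∈ s, ‖f m‖ ^ 2 := by simp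

private lemma expand_count (F : ℤ → ℂ) (j : ℕ) :
    ∑ q1 ∈ Finset.Icc (1:ℤ) (j:ℤ), ∑ q2 ∈ Finset.Icc (1:ℤ) (j:ℤ), F (q1 - q2)
      = ∑ q ∈ Finset.Icc (-(j:ℤ)) (j:ℤ), ((j:ℤ) - |q|) • F q := by
  induction j with
  | zero => simp
  | succ j ih =>
    have hc : ((j+1 : ℕ) : ℤ) = (j:ℤ) + 1 := by push_cast; ring
    rw [hc]
    set J : ℤ := (j : ℤ) with hJ
    have hJ0 : 0 ≤ J := Int.ofNat_nonneg j
    have hins : Finset.Icc (1:ℤ) (J+1) = insert (J+1) (Finset.Icc 1 J) := by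
      ext x; simp only [Finset.mem_Icc, Finset.mem_insert]; omega
    have hnot : (J+1) ∉ Finset.Icc (1:ℤ) J := by simp
    have hrow : ∑ q2 ∈ Finset.Icc (1:ℤ) J, F ((J+1) - q2) = ∑ q ∈ Finset.Icc (1:ℤ) J, F q := by
      rw [sum_reflect F 1 J (J+1), show J+1-J = (1:ℤ) from by ring, show J+1-1 = J from by ring]
    have hcol : ∑ q1 ∈ Finset.Icc (1:ℤ) J, F (q1 - (J+1)) = ∑ q ∈ Finset.Icc (-J) (-1:ℤ), F q := by
      have h := sum_shift F 1 J (-(J+1))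
      simp only [sub_eq_add_neg] at *
      rw [h, show (1:ℤ) + -(J+1) = -J from by ring, show J + -(J+1) = (-1:ℤ) from by ring]
    have hsplit : ∑ q ∈ Finset.Icc (-J) J, F q
        = (∑ q ∈ Finset.Icc (-J) (-1:ℤ), F q) + (F 0 + ∑ q ∈ Finset.Icc (1:ℤ) J, F q) := by
      have h1 : Finset.Icc (-J) J = Finset.Icc (-J) (-1:ℤ) ∪ Finset.Icc (0:ℤ) J := by
        ext x; simp only [Finset.mem_Icc, Finset.mem_union]; omega
      have h2 : Disjoint (Finset.Icc (-J) (-1:ℤ)) (Finset.Icc (0:ℤ) J) := by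
        rw [Finset.disjoint_left]; intro x hx hx'
        simp only [Finset.mem_Icc] at hx hx'; omega
      have h3 : Finset.Icc (0:ℤ) J = insert 0 (Finset.Icc (1:ℤ) J) := by
        ext x; simp only [Finset.mem_Icc, Finset.mem_insert]; omega
      have h4 : (0:ℤ) ∉ Finset.Icc (1:ℤ) J := by simp
      rw [h1, Finset.sum_union h2, h3, Finset.sum_insert h4]
    have hR : ∑ q ∈ Finset.Icc (-(J+1)) (J+1), ((J+1) - |q|) • F q
        = ∑ q ∈ Finset.Icc (-J) J, ((J+1) - |q|) • F q := by
      symm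
      apply Finset.sum_subset (Finset.Icc_subset_Icc (by omega) (by omega))
      intro x hx hnx
      simp only [Finset.mem_Icc] at hx hnx
      have hx' : x = J+1 ∨ x = -(J+1) := by omega
      have habs : |x| = J + 1 := by
        rcases hx' with h | h <;> subst h
        · exact abs_of_nonneg (by omega)
        · rw [abs_neg]; exact abs_of_nonneg (by omega)
      rw [habs, show J+1-(J+1) = (0:ℤ) from by ring, zero_smul]
    have hw : ∑ q ∈ Finset.Icc (-J) J, ((J+1) - |q|) • F q
        = (∑ q ∈ Finset.Icc (-J) J, (J - |q|) • F q) + ∑ q ∈ Finset.Icc (-J) J, F q := by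
      rw [← Finset.sum_add_distrib]
      apply Finset.sum_congr rfl
      intro x _
      rw [show J+1-|x| = (J-|x|)+1 from by ring, add_smul, one_smul]
    rw [hins]
    simp only [Finset.sum_insert hnot, Finset.sum_add_distrib]
    rw [show J+1-(J+1) = (0:ℤ) from by ring, hrow, hcol, ih, hR, hw, hsplit]
    abel

private noncomputable def zp (z : ℤ → ℂ) (a b : ℤ) : ℤ → ℂ := fun n => if n ∈ Finset.Ioc a b then z n else 0

private noncomputable def Tp (z : ℤ → ℂ) (a b c : ℤ) (q : ℤ) : ℂ :=
  ∑ n ∈ Finset.Icc (a - c) (b + c), zp z a b (n + q) * (starRingEnd ℂ) (zp z a b (n - q))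

private lemma zp_zero (z : ℤ → ℂ) (a b : ℤ) (x : ℤ) (hx : x ∉ Finset.Icc (a+1) b) :
    zp z a b x = 0 := by
  simp only [Finset.mem_Icc, not_and_or, not_le] at hx
  simp only [zp, Finset.mem_Ioc]
  rw [if_neg]
  omega

private lemma innerShift (z : ℤ → ℂ) (a b c : ℤ) (hc : 1 ≤ c) (j q1 q2 : ℤ)
    (h1 : 1 ≤ q1) (h2 : q1 ≤ j) (h3 : 1 ≤ q2) (h4 : q2 ≤ j) :
    ∑ m ∈ Finset.Icc (a + 1 - 2*j) (b - 2),
      zp z a b (m + 2*q1) * (starRingEnd ℂ) (zp z a b (m + 2*q2))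
      = Tp z a b c (q1 - q2) := by
  have hsupp : ∀ n : ℤ, n ∉ Finset.Icc (a+1) b →
      zp z a b (n + (q1 - q2)) * (starRingEnd ℂ) (zp z a b (n - (q1 - q2))) = 0 := by
    intro n hn
    by_cases hm1 : n + (q1 - q2) ∈ Finset.Icc (a+1) b
    · by_cases hm2 : n - (q1 - q2) ∈ Finset.Icc (a+1) b
      · exfalso
        simp only [Finset.mem_Icc] at hm1 hm2 hn
        omega
      · rw [zp_zero z a b _ hm2, map_zero, mul_zero]
    · rw [zp_zero z a b _ hm1, zero_mul]
  have e1 : ∀ m ∈ Finset.Icc (a + 1 - 2*j) (b - 2),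
      zp z a b (m + 2*q1) * (starRingEnd ℂ) (zp z a b (m + 2*q2))
        = (fun n => zp z a b (n + (q1 - q2)) * (starRingEnd ℂ) (zp z a b (n - (q1 - q2))))
            (m + (q1 + q2)) := by
    intro m _
    simp only
    rw [show m + (q1+q2) + (q1 - q2) = m + 2*q1 from by ring,
        show m + (q1+q2) - (q1 - q2) = m + 2*q2 from by ring]
  rw [Finset.sum_congr rfl e1,
    sum_shift (fun n => zp z a b (n + (q1 - q2)) * (starRingEnd ℂ) (zp z a b (n - (q1 - q2))))
      (a + 1 - 2*j) (b - 2) (q1 + q2)]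
  rw [← Finset.sum_subset
      (Finset.Icc_subset_Icc (by omega) (by omega) :
        Finset.Icc (a+1) b ⊆ Finset.Icc (a+1-2*j + (q1+q2)) (b-2 + (q1+q2)))
      (fun x _ hx => hsupp x hx)]
  rw [Tp]
  rw [← Finset.sum_subset
      (Finset.Icc_subset_Icc (by omega) (by omega) :
        Finset.Icc (a+1) b ⊆ Finset.Icc (a-c) (b+c))
      (fun x _ hx => hsupp x hx)]

private lemma expand_P (z : ℤ → ℂ) (a b c : ℤ) (hc : 1 ≤ c) (j : ℕ) :
    ∑ m ∈ Finset.Icc (a + 1 - 2*(j:ℤ)) (b - 2),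
      (∑ q ∈ Finset.Icc (1:ℤ) (j:ℤ), zp z a b (m + 2*q)) *
        (starRingEnd ℂ) (∑ q ∈ Finset.Icc (1:ℤ) (j:ℤ), zp z a b (m + 2*q))
      = ∑ q ∈ Finset.Icc (-(j:ℤ)) (j:ℤ), ((j:ℤ) - |q|) • Tp z a b c q := by
  have step1 : ∀ m ∈ Finset.Icc (a + 1 - 2*(j:ℤ)) (b - 2),
      (∑ q ∈ Finset.Icc (1:ℤ) (j:ℤ), zp z a b (m + 2*q)) *
        (starRingEnd ℂ) (∑ q ∈ Finset.Icc (1:ℤ) (j:ℤ), zp z a b (m + 2*q))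
      = ∑ q1 ∈ Finset.Icc (1:ℤ) (j:ℤ), ∑ q2 ∈ Finset.Icc (1:ℤ) (j:ℤ),
          zp z a b (m + 2*q1) * (starRingEnd ℂ) (zp z a b (m + 2*q2)) := by
    intro m _
    rw [map_sum, Finset.sum_mul_sum]
  rw [Finset.sum_congr rfl step1, Finset.sum_comm]
  have step2 : ∀ q1 ∈ Finset.Icc (1:ℤ) (j:ℤ),
      (∑ m ∈ Finset.Icc (a + 1 - 2*(j:ℤ)) (b - 2), ∑ q2 ∈ Finset.Icc (1:ℤ) (j:ℤ),
        zp z a b (m + 2*q1) * (starRingEnd ℂ) (zp z a b (m + 2*q2)))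
      = ∑ q2 ∈ Finset.Icc (1:ℤ) (j:ℤ), Tp z a b c (q1 - q2) := by
    intro q1 hq1
    rw [Finset.sum_comm]
    apply Finset.sum_congr rfl
    intro q2 hq2
    simp only [Finset.mem_Icc] at hq1 hq2
    exact innerShift z a b c hc (j:ℤ) q1 q2 hq1.1 hq1.2 hq2.1 hq2.2
  rw [Finset.sum_congr rfl step2]
  exact expand_count (Tp z a b c) j

private lemma sum_V (z : ℤ → ℂ) (a b : ℤ) (j : ℕ) :
    ∑ m ∈ Finset.Icc (a + 1 - 2*(j:ℤ)) (b - 2), ∑ q ∈ Finset.Icc (1:ℤ) (j:ℤ), zp z a b (m + 2*q)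
      = (j : ℂ) * ∑ n ∈ Finset.Ioc a b, z n := by
  rw [Finset.sum_comm]
  have key : ∀ q ∈ Finset.Icc (1:ℤ) (j:ℤ),
      (∑ m ∈ Finset.Icc (a + 1 - 2*(j:ℤ)) (b - 2), zp z a b (m + 2*q))
        = ∑ n ∈ Finset.Ioc a b, z n := by
    intro q hq
    simp only [Finset.mem_Icc] at hq
    rw [sum_shift (zp z a b) (a + 1 - 2*(j:ℤ)) (b - 2) (2*q)]
    rw [← Finset.sum_subset
        (Finset.Icc_subset_Icc (by omega) (by omega) :
          Finset.Icc (a+1) b ⊆ Finset.Icc (a+1-2*(j:ℤ) + 2*q) (b-2 + 2*q))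
        (fun x _ hx => zp_zero z a b x hx)]
    have hIoc : Finset.Ioc a b = Finset.Icc (a+1) b := by
      ext x; simp only [Finset.mem_Ioc, Finset.mem_Icc]; omega
    rw [hIoc]
    apply Finset.sum_congr rfl
    intro x hx
    simp only [zp, Finset.mem_Ioc, Finset.mem_Icc] at *
    rw [if_pos (by omega)]
  rw [Finset.sum_congr rfl key, Finset.sum_const, Int.card_Icc]
  simp [nsmul_eq_mul]

private lemma engel_ineq (t u K : ℝ) (ht0 : 0 < t) (ht1 : t ≤ 1) (hu : 0 < u) :
    (K+t)^2 * (u*(u+2)) ≤ (u+2*t+1) * ((1-t)*K^2*(u+2) + t*(K+1)^2*u) := by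
  nlinarith [mul_nonneg (mul_nonneg ht0.le (by linarith : (0:ℝ) ≤ 1-t)) (sq_nonneg (2*K-u)),
    mul_nonneg (mul_nonneg (by linarith : (0:ℝ) ≤ 1-t) (sq_nonneg K)) (by linarith : (0:ℝ) ≤ u+2),
    mul_nonneg (mul_nonneg ht0.le (sq_nonneg (K+1))) hu.le]

private lemma final_ineq (N Q Kr E PK Pc u : ℝ) (hN : 1 ≤ N) (hK1R : 1 ≤ Kr)
    (hθ0 : 0 < Q - Kr) (hθ1 : Q - Kr ≤ 1) (hu : u = N + 2*Kr - 1)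
    (hE0 : 0 ≤ E) (h1 : Kr^2 * E ≤ u * PK) (h2 : (Kr+1)^2 * E ≤ (u+2)*Pc) :
    E * Q^2 ≤ (2*Q + N) * ((1 - (Q - Kr)) * PK + (Q - Kr) * Pc) := by
  have hu0 : 0 < u := by rw [hu]; linarith
  have hE := engel_ineq (Q - Kr) u Kr hθ0 hθ1 hu0
  have hscale := mul_le_mul_of_nonneg_right hE hE0
  have hQK : Kr + (Q - Kr) = Q := by ring
  have hw : u + 2*(Q - Kr) + 1 = 2*Q + N := by rw [hu]; ring
  rw [hQK, hw] at hscale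
  have hc1' : (0:ℝ) ≤ (2*Q + N) * ((1 - (Q - Kr)) * (u+2)) := by
    have h5 : (0:ℝ) ≤ 1 - (Q - Kr) := by linarith
    have h6 : (0:ℝ) ≤ 2*Q + N := by linarith
    positivity
  have hc2' : (0:ℝ) ≤ (2*Q + N) * ((Q - Kr) * u) := by
    have h6 : (0:ℝ) ≤ 2*Q + N := by linarith
    positivity
  have hm1 := mul_le_mul_of_nonneg_left h1 hc1'
  have hm2 := mul_le_mul_of_nonneg_left h2 hc2'
  have huv0 : (0:ℝ) < u * (u + 2) := by positivity
  have hfinal : (E * Q^2) * (u * (u+2)) ≤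
      ((2*Q + N) * ((1 - (Q - Kr)) * PK + (Q - Kr) * Pc)) * (u * (u+2)) := by
    nlinarith [hscale, hm1, hm2]
  exact le_of_mul_le_mul_right hfinal huv0



/-- Lemma 2.11, Fouvry–Iwaniec: for real `N, Q ≥ 1` and complex numbers
`z_n` indexed by integers,
`|Σ_{N < n ≤ 2N} z_n|² ≤ (2 + N/Q) Σ_{|q| < Q} (1 − |q|/Q) Σ_{N < n±q ≤ 2N} z_{n+q} conj(z_{n−q})`,
the (real) double sum on the right being expressed via its real part. -/
theorem stmt13 (N Q : ℝ) (hN : 1 ≤ N) (hQ : 1 ≤ Q) (z : ℤ → ℂ) :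
    ‖∑ n ∈ Finset.Ioc ⌊N⌋ ⌊2 * N⌋, z n‖ ^ 2 ≤
      (2 + N / Q) *
        (∑ q ∈ Finset.Ioo (-⌈Q⌉) ⌈Q⌉, ((1 - |(q : ℝ)| / Q : ℝ) : ℂ) *
          ∑ n ∈ (Finset.Icc (⌊N⌋ - ⌈Q⌉) (⌊2 * N⌋ + ⌈Q⌉)).filter
              (fun n : ℤ => N < (n : ℝ) + (q : ℝ) ∧ (n : ℝ) + (q : ℝ) ≤ 2 * N ∧
                N < (n : ℝ) - (q : ℝ) ∧ (n : ℝ) - (q : ℝ) ≤ 2 * N),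
            z (n + q) * (starRingEnd ℂ) (z (n - q))).re := by

  have hQ0 : (0:ℝ) < Q := by linarith
  set a : ℤ := ⌊N⌋ with ha
  set b : ℤ := ⌊2*N⌋ with hb
  set c : ℤ := ⌈Q⌉ with hc
  have haR : (a:ℝ) ≤ N := Int.floor_le N
  have haR' : N < (a:ℝ) + 1 := Int.lt_floor_add_one N
  have hbR : (b:ℝ) ≤ 2*N := Int.floor_le _
  have hcQ : Q ≤ (c:ℝ) := Int.le_ceil Q
  have hcQ' : (c:ℝ) < Q + 1 := Int.ceil_lt_add_one Q
  have hc1 : 1 ≤ c := by exact_mod_cast (by linarith : (1:ℝ) ≤ (c:ℝ))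
  have hab : a + 1 ≤ b := by
    rw [hb]
    apply Int.le_floor.mpr
    push_cast
    linarith
  obtain ⟨K, hKc⟩ : ∃ K : ℕ, c = (K:ℤ) + 1 := ⟨(c-1).toNat, by omega⟩
  set S : ℂ := ∑ n ∈ Finset.Ioc a b, z n with hS
  have hmem : ∀ m : ℤ, m ∈ Finset.Ioc a b ↔ (N < (m:ℝ) ∧ (m:ℝ) ≤ 2*N) := by
    intro m
    rw [Finset.mem_Ioc]
    constructor
    · rintro ⟨h1, h2⟩
      exact ⟨Int.floor_lt.mp h1, Int.le_floor.mp h2⟩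
    · rintro ⟨h1, h2⟩
      exact ⟨Int.floor_lt.mpr h1, Int.le_floor.mpr h2⟩
  have hT : ∀ q : ℤ,
      (∑ n ∈ (Finset.Icc (a - c) (b + c)).filter
          (fun n : ℤ => N < (n : ℝ) + (q : ℝ) ∧ (n : ℝ) + (q : ℝ) ≤ 2 * N ∧
            N < (n : ℝ) - (q : ℝ) ∧ (n : ℝ) - (q : ℝ) ≤ 2 * N),
        z (n + q) * (starRingEnd ℂ) (z (n - q))) = Tp z a b c q := by
    intro q
    rw [Tp, Finset.sum_filter]
    apply Finset.sum_congr rfl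
    intro n _
    have h1 : ((n+q) ∈ Finset.Ioc a b) ↔ (N < (n:ℝ)+(q:ℝ) ∧ (n:ℝ)+(q:ℝ) ≤ 2*N) := by
      rw [hmem (n+q)]
      push_cast
      tauto
    have h2 : ((n-q) ∈ Finset.Ioc a b) ↔ (N < (n:ℝ)-(q:ℝ) ∧ (n:ℝ)-(q:ℝ) ≤ 2*N) := by
      rw [hmem (n-q)]
      push_cast
      tauto
    by_cases hcond : (N < (n:ℝ)+(q:ℝ) ∧ (n:ℝ)+(q:ℝ) ≤ 2*N ∧ N < (n:ℝ)-(q:ℝ) ∧ (n:ℝ)-(q:ℝ) ≤ 2*N)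
    · rw [if_pos hcond]
      obtain ⟨c1, c2, c3, c4⟩ := hcond
      simp only [zp]
      rw [if_pos (h1.mpr ⟨c1, c2⟩), if_pos (h2.mpr ⟨c3, c4⟩)]
    · rw [if_neg hcond]
      by_cases hm1 : (n+q) ∈ Finset.Ioc a b
      · have hm2 : (n-q) ∉ Finset.Ioc a b := by
          intro hm2
          exact hcond ⟨(h1.mp hm1).1, (h1.mp hm1).2, (h2.mp hm2).1, (h2.mp hm2).2⟩
        simp only [zp]
        rw [if_neg hm2, map_zero, mul_zero]
      · simp only [zp]
        rw [if_neg hm1, zero_mul]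
  set R : ℤ → ℝ := fun q => (Tp z a b c q).re with hR
  set P : ℕ → ℝ := fun j => ∑ m ∈ Finset.Icc (a + 1 - 2*(j:ℤ)) (b - 2),
      ‖∑ q ∈ Finset.Icc (1:ℤ) (j:ℤ), zp z a b (m + 2*q)‖^2 with hP
  have hPnn : ∀ j, 0 ≤ P j := by
    intro j
    apply Finset.sum_nonneg
    intro m _
    positivity
  have hPexp : ∀ j : ℕ, P j = ∑ q ∈ Finset.Icc (-(j:ℤ)) (j:ℤ), ((j:ℝ) - |(q:ℝ)|) * R q := by
    intro j
    have hcx : ((P j : ℝ) : ℂ) = ∑ m ∈ Finset.Icc (a + 1 - 2*(j:ℤ)) (b - 2),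
        (∑ q ∈ Finset.Icc (1:ℤ) (j:ℤ), zp z a b (m + 2*q)) *
          (starRingEnd ℂ) (∑ q ∈ Finset.Icc (1:ℤ) (j:ℤ), zp z a b (m + 2*q)) := by
      rw [hP]
      push_cast
      apply Finset.sum_congr rfl
      intro m _
      rw [Complex.mul_conj]
      norm_cast
      rw [Complex.normSq_eq_norm_sq]
    have hre := congrArg Complex.re (hcx.trans (expand_P z a b c hc1 j))
    rw [Complex.ofReal_re] at hre
    rw [hre, Complex.re_sum]
    apply Finset.sum_congr rfl
    intro q _
    rw [zsmul_eq_mul]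
    simp only [Complex.mul_re, Complex.intCast_re, Complex.intCast_im, zero_mul, sub_zero]
    push_cast [Int.cast_abs]
    ring
  have hCauchy : ∀ j : ℕ, ((j:ℝ))^2 * ‖S‖^2 ≤
      (((Finset.Icc (a + 1 - 2*(j:ℤ)) (b - 2)).card : ℝ)) * P j := by
    intro j
    have h1 := cauchy_sq (Finset.Icc (a + 1 - 2*(j:ℤ)) (b - 2))
      (fun m => ∑ q ∈ Finset.Icc (1:ℤ) (j:ℤ), zp z a b (m + 2*q))
    have h2 : ∑ m ∈ Finset.Icc (a + 1 - 2*(j:ℤ)) (b - 2),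
        ∑ q ∈ Finset.Icc (1:ℤ) (j:ℤ), zp z a b (m + 2*q) = (j:ℂ) * S := sum_V z a b j
    rw [h2] at h1
    have h3 : ‖(j:ℂ) * S‖^2 = (j:ℝ)^2 * ‖S‖^2 := by
      rw [norm_mul, mul_pow, Complex.norm_natCast]
    rw [h3] at h1
    exact h1
  have hcard : ∀ j : ℕ, 1 ≤ j →
      (((Finset.Icc (a + 1 - 2*(j:ℤ)) (b - 2)).card : ℝ)) ≤ (b:ℝ) - (a:ℝ) + 2*(j:ℝ) - 2 := by
    intro j hj
    rw [Int.card_Icc]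
    have h0 : (0:ℤ) ≤ b - 2 + 1 - (a + 1 - 2*(j:ℤ)) := by omega
    have h1 : ((b - 2 + 1 - (a + 1 - 2*(j:ℤ))).toNat : ℤ) = b - 2 + 1 - (a + 1 - 2*(j:ℤ)) :=
      Int.toNat_of_nonneg h0
    have h2 : (((b - 2 + 1 - (a + 1 - 2*(j:ℤ))).toNat : ℤ) : ℝ) = (b:ℝ) - (a:ℝ) + 2*(j:ℝ) - 2 := by
      rw [h1]; push_cast; ring
    push_cast at h2
    linarith [h2.le]
  have hIoo : Finset.Ioo (-c) c = Finset.Icc (-(K:ℤ)) (K:ℤ) := by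
    ext x
    simp only [Finset.mem_Ioo, Finset.mem_Icc]
    omega
  have hgoal : (∑ q ∈ Finset.Ioo (-c) c, ((1 - |(q : ℝ)| / Q : ℝ) : ℂ) *
      ∑ n ∈ (Finset.Icc (a - c) (b + c)).filter
          (fun n : ℤ => N < (n : ℝ) + (q : ℝ) ∧ (n : ℝ) + (q : ℝ) ≤ 2 * N ∧
            N < (n : ℝ) - (q : ℝ) ∧ (n : ℝ) - (q : ℝ) ≤ 2 * N),
        z (n + q) * (starRingEnd ℂ) (z (n - q))).re
      = ∑ q ∈ Finset.Icc (-(K:ℤ)) (K:ℤ), (1 - |(q:ℝ)| / Q) * R q := by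
    rw [Finset.sum_congr hIoo (fun q _ => by rw [hT q]), Complex.re_sum]
    apply Finset.sum_congr rfl
    intro q _
    simp only [Complex.mul_re, Complex.ofReal_re, Complex.ofReal_im, zero_mul, sub_zero]
    rfl
  rw [hgoal]
  have hPc : P (K+1) = ∑ q ∈ Finset.Icc (-(K:ℤ)) (K:ℤ), ((K:ℝ) + 1 - |(q:ℝ)|) * R q := by
    have hsub : Finset.Icc (-(K:ℤ)) (K:ℤ) ⊆ Finset.Icc (-(((K+1):ℕ):ℤ)) (((K+1):ℕ):ℤ) := by
      apply Finset.Icc_subset_Icc <;> push_cast <;> omega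
    rw [hPexp (K+1), ← Finset.sum_subset hsub]
    · apply Finset.sum_congr rfl
      intro q _
      push_cast
      ring
    · intro x hx hnx
      simp only [Finset.mem_Icc] at hx hnx
      push_cast at hx
      have hx' : x = (K:ℤ)+1 ∨ x = -((K:ℤ)+1) := by
        have : -((K:ℤ)+1) ≤ x ∧ x ≤ (K:ℤ)+1 := by exact_mod_cast hx
        omega
      have habs : |(x:ℝ)| = (K:ℝ) + 1 := by
        rcases hx' with h | h <;> subst h
        · push_cast
          exact abs_of_nonneg (by positivity)
        · push_cast
          rw [abs_neg]
          exact abs_of_nonneg (by positivity)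
      push_cast
      rw [habs]
      ring
  have hcomb : ∑ q ∈ Finset.Icc (-(K:ℤ)) (K:ℤ), (1 - |(q:ℝ)| / Q) * R q
      = ((1 - (Q - (K:ℝ))) * P K + (Q - (K:ℝ)) * P (K+1)) / Q := by
    rw [eq_div_iff (ne_of_gt hQ0), hPexp K, hPc, Finset.sum_mul, Finset.mul_sum, Finset.mul_sum,
      ← Finset.sum_add_distrib]
    apply Finset.sum_congr rfl
    intro q _
    field_simp
    ring
  rw [hcomb]
  have hcKR : ((c:ℝ)) = (K:ℝ) + 1 := by rw [hKc]; push_cast; ring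
  have hθ0 : 0 < Q - (K:ℝ) := by linarith
  have hθ1 : Q - (K:ℝ) ≤ 1 := by linarith
  have hE0 : (0:ℝ) ≤ ‖S‖^2 := by positivity
  have hbaR : (b:ℝ) - (a:ℝ) < N + 1 := by linarith
  have hform : (2 + N / Q) * (((1 - (Q - (K:ℝ))) * P K + (Q - (K:ℝ)) * P (K+1)) / Q)
      = ((2*Q + N) * ((1 - (Q - (K:ℝ))) * P K + (Q - (K:ℝ)) * P (K+1))) / Q^2 := by
    have h7 : Q ≠ 0 := ne_of_gt hQ0
    rw [show 2 + N/Q = (2*Q+N)/Q from by field_simp, div_mul_div_comm, ← pow_two]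
  rw [hform, le_div_iff₀ (by positivity)]
  clear hform hcomb hgoal hT hmem hPexp hPc hIoo hb hc hKc hc1 hab
  clear_value S P R
  clear hR hP hS R
  rcases Nat.eq_zero_or_pos K with hK0 | hK1
  · subst hK0
    have hQ1 : Q = 1 := by push_cast at hcKR; linarith
    have h1 := hCauchy 1
    have h2 := hcard 1 le_rfl
    have h3 := hPnn 1
    rw [hQ1]
    push_cast at h1 h2 ⊢
    nlinarith [h1, h2, h3, hE0, hbaR]
  · have hK1R : (1:ℝ) ≤ (K:ℝ) := by exact_mod_cast hK1
    have h1 : (K:ℝ)^2 * ‖S‖^2 ≤ (N + 2*(K:ℝ) - 1) * P K := by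
      have hC := hCauchy K
      have hcK := hcard K hK1
      nlinarith [hPnn K]
    have h2 : ((K:ℝ)+1)^2 * ‖S‖^2 ≤ ((N + 2*(K:ℝ) - 1)+2) * P (K+1) := by
      have hC := hCauchy (K+1)
      have hcK := hcard (K+1) (by omega)
      push_cast at hC hcK
      nlinarith [hPnn (K+1)]
    exact final_ineq N Q (K:ℝ) (‖S‖^2) (P K) (P (K+1)) (N + 2*(K:ℝ) - 1)
      hN hK1R hθ0 hθ1 rfl hE0 h1 h2
end

section
/- Let L(H) = Σ_{i=1}^m A_i H^{a_i} + Σ_{j=1}^n B_j H^{−b_j}, where A_i, B_j, a_i, b_j are all positive real numbers, and assume H₁ ≤ H₂ are positive reals. Then there exists ℋ with H₁ ≤ ℋ ≤ H₂ such that L(ℋ) ≪ Σ_{i=1}^m A_i H₁^{a_i} + Σ_{j=1}^n B_j H₂^{−b_j} + Σ_{i=1}^m Σ_{j=1}^n (A_i^{b_j} B_j^{a_i})^{1/(a_i + b_j)}, where the implied constant depends only on m and n. -/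
/-- min of two positives is at most the weighted geometric mean. -/
lemma aux_min_le_gm {u v p q : ℝ} (hu : 0 < u) (hv : 0 < v) (hp : 0 < p) (hq : 0 < q) :
    min u v ≤ (u ^ q * v ^ p) ^ (1 / (p + q)) := by
  have hm : 0 < min u v := lt_min hu hv
  have hpq : 0 < p + q := by linarith
  have h1 : min u v = ((min u v) ^ (p + q)) ^ (1 / (p + q)) := by
    rw [← Real.rpow_mul hm.le, mul_one_div, div_self hpq.ne', Real.rpow_one]
  rw [h1]
  apply Real.rpow_le_rpow (by positivity) _ (by positivity)
  calc (min u v) ^ (p + q) = (min u v) ^ q * (min u v) ^ p := by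
        rw [← Real.rpow_add hm, add_comm]
    _ ≤ u ^ q * v ^ p :=
        mul_le_mul (Real.rpow_le_rpow hm.le (min_le_left _ _) hq.le)
          (Real.rpow_le_rpow hm.le (min_le_right _ _) hp.le) (by positivity) (by positivity)

lemma aux_id {A B H p q : ℝ} (hA : 0 < A) (hB : 0 < B) (hH : 0 < H) :
    (A * H ^ p) ^ q * (B * H ^ (-q)) ^ p = A ^ q * B ^ p := by
  rw [Real.mul_rpow hA.le (Real.rpow_nonneg hH.le _),
      Real.mul_rpow hB.le (Real.rpow_nonneg hH.le _),
      ← Real.rpow_mul hH.le, ← Real.rpow_mul hH.le, mul_mul_mul_comm,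
      ← Real.rpow_add hH, show p * q + -q * p = 0 by ring, Real.rpow_zero, mul_one]

/-- Lemma 2.12, Graham–Kolesnik: let
`L(H) = Σ_{i=1}^m A_i H^{a_i} + Σ_{j=1}^n B_j H^{−b_j}` with all `A_i, B_j, a_i, b_j > 0`,
and `0 < H₁ ≤ H₂`. Then there is `ℋ ∈ [H₁, H₂]` with
`L(ℋ) ≪_{m,n} Σ_i A_i H₁^{a_i} + Σ_j B_j H₂^{−b_j} + Σ_i Σ_j (A_i^{b_j} B_j^{a_i})^{1/(a_i+b_j)}`. -/
theorem stmt14 (m n : ℕ) :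
    ∃ C > 0, ∀ A a : Fin m → ℝ, ∀ B b : Fin n → ℝ,
      (∀ i, 0 < A i) → (∀ i, 0 < a i) → (∀ j, 0 < B j) → (∀ j, 0 < b j) →
      ∀ H₁ H₂ : ℝ, 0 < H₁ → H₁ ≤ H₂ →
      ∃ H', H₁ ≤ H' ∧ H' ≤ H₂ ∧
        (∑ i, A i * H' ^ (a i)) + (∑ j, B j * H' ^ (-(b j))) ≤
          C * ((∑ i, A i * H₁ ^ (a i)) + (∑ j, B j * H₂ ^ (-(b j))) +
            ∑ i, ∑ j, ((A i) ^ (b j) * (B j) ^ (a i)) ^ (1 / (a i + b j))) := by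
  refine ⟨m + 2, by positivity, ?_⟩
  intro A a B b hA ha hB hb H₁ H₂ hH₁ hH
  have hH₂ : 0 < H₂ := lt_of_lt_of_le hH₁ hH
  set S : ℝ → ℝ := fun H => ∑ j, B j * H ^ (-(b j)) with hSdef
  set T₁ : ℝ := ∑ i, A i * H₁ ^ (a i) with hT₁def
  set X : ℝ := ∑ i, ∑ j, ((A i) ^ (b j) * (B j) ^ (a i)) ^ (1 / (a i + b j)) with hXdef
  set V : ℝ := T₁ + S H₂ + X with hVdef
  have hT₁0 : 0 ≤ T₁ := Finset.sum_nonneg fun i _ => by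
    have := hA i; have := Real.rpow_pos_of_pos hH₁ (a i); positivity
  have hX0 : 0 ≤ X := Finset.sum_nonneg fun i _ => Finset.sum_nonneg fun j _ => by
    have := hA i; have := hB j; positivity
  have hS0 : ∀ H, 0 < H → 0 ≤ S H := fun H hH0 => Finset.sum_nonneg fun j _ => by
    have := hB j; have := Real.rpow_pos_of_pos hH0 (-(b j)); positivity
  have hV0 : 0 ≤ V := by
    have := hS0 H₂ hH₂; simp only [hVdef]; linarith
  -- key pointwise inequality
  have key : ∀ H, 0 < H → ∀ i j,
      min (A i * H ^ (a i)) (B j * H ^ (-(b j))) ≤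
        ((A i) ^ (b j) * (B j) ^ (a i)) ^ (1 / (a i + b j)) := by
    intro H hH0 i j
    have h := aux_min_le_gm (u := A i * H ^ (a i)) (v := B j * H ^ (-(b j)))
      (by have := Real.rpow_pos_of_pos hH0 (a i); have := hA i; positivity)
      (by have := Real.rpow_pos_of_pos hH0 (-(b j)); have := hB j; positivity)
      (ha i) (hb j)
    rwa [aux_id (hA i) (hB j) hH0] at h
  have hXij : ∀ i j, ((A i) ^ (b j) * (B j) ^ (a i)) ^ (1 / (a i + b j)) ≤ X := by
    intro i j
    have h1 : ((A i) ^ (b j) * (B j) ^ (a i)) ^ (1 / (a i + b j)) ≤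
        ∑ j', ((A i) ^ (b j') * (B j') ^ (a i)) ^ (1 / (a i + b j')) :=
      Finset.single_le_sum (f := fun j' => ((A i) ^ (b j') * (B j') ^ (a i)) ^ (1 / (a i + b j')))
        (fun j' _ => by have := hA i; have := hB j'; positivity) (Finset.mem_univ j)
    have h2 : (∑ j', ((A i) ^ (b j') * (B j') ^ (a i)) ^ (1 / (a i + b j'))) ≤ X :=
      Finset.single_le_sum
        (f := fun i' => ∑ j', ((A i') ^ (b j') * (B j') ^ (a i')) ^ (1 / (a i' + b j')))
        (fun i' _ => Finset.sum_nonneg fun j' _ => by have := hA i'; have := hB j'; positivity)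
        (Finset.mem_univ i)
    linarith
  by_cases hc : S H₁ ≤ V
  · -- take H' = H₁
    refine ⟨H₁, le_refl _, hH, ?_⟩
    have : T₁ + S H₁ ≤ 2 * V := by
      have h1 := hS0 H₂ hH₂
      simp only [hVdef] at hc ⊢; linarith
    calc T₁ + S H₁ ≤ 2 * V := this
      _ ≤ (m + 2) * V := by nlinarith [hV0]
  · push_neg at hc
    -- IVT to find H' with S H' = V
    have hcont : ContinuousOn S (Set.Icc H₁ H₂) := by
      apply continuousOn_finset_sum
      intro j _
      exact continuousOn_const.mul (ContinuousOn.rpow_const continuousOn_id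
        fun x hx => Or.inl (ne_of_gt (lt_of_lt_of_le hH₁ hx.1)))
    have hmem : V ∈ Set.Icc (S H₂) (S H₁) := by
      constructor
      · simp only [hVdef]; linarith
      · exact hc.le
    obtain ⟨H', hH'mem, hSH'⟩ := intermediate_value_Icc' hH hcont hmem
    have hH'1 : H₁ ≤ H' := hH'mem.1
    have hH'2 : H' ≤ H₂ := hH'mem.2
    have hH'0 : 0 < H' := lt_of_lt_of_le hH₁ hH'1
    refine ⟨H', hH'1, hH'2, ?_⟩
    -- T₁ > 0 if we're in this case? not needed directly; bound each A i * H'^{a i} by X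
    have hTbound : ∀ i, A i * H' ^ (a i) ≤ X := by
      intro i
      by_contra hcon
      push_neg at hcon
      have hvj : ∀ j, B j * H' ^ (-(b j)) ≤ ((A i) ^ (b j) * (B j) ^ (a i)) ^ (1 / (a i + b j)) := by
        intro j
        have h1 := key H' hH'0 i j
        have h2 := hXij i j
        by_contra hv
        push_neg at hv
        have h3 : ((A i) ^ (b j) * (B j) ^ (a i)) ^ (1 / (a i + b j)) <
            min (A i * H' ^ (a i)) (B j * H' ^ (-(b j))) :=
          lt_min (lt_of_le_of_lt h2 hcon) hv
        exact absurd h1 (not_le.mpr h3)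
      have hSle : S H' ≤ X := by
        calc S H' ≤ ∑ j, ((A i) ^ (b j) * (B j) ^ (a i)) ^ (1 / (a i + b j)) :=
              Finset.sum_le_sum fun j _ => hvj j
          _ ≤ X := by
              apply Finset.single_le_sum (f := fun i' => ∑ j, ((A i') ^ (b j) * (B j) ^ (a i')) ^ (1 / (a i' + b j)))
                (fun i' _ => Finset.sum_nonneg fun j _ => by
                  have := hA i'; have := hB j; positivity) (Finset.mem_univ i)
      have hT₁pos : 0 < T₁ := by
        apply Finset.sum_pos' (fun i' _ => by
          have := hA i'; have := Real.rpow_pos_of_pos hH₁ (a i'); positivity)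
        exact ⟨i, Finset.mem_univ i, by
          have := hA i; have := Real.rpow_pos_of_pos hH₁ (a i); positivity⟩
      have : X < V := by simp only [hVdef]; have := hS0 H₂ hH₂; linarith
      rw [hSH'] at hSle
      linarith
    have hTsum : (∑ i, A i * H' ^ (a i)) ≤ m * X := by
      calc (∑ i, A i * H' ^ (a i)) ≤ ∑ _i : Fin m, X := Finset.sum_le_sum fun i _ => hTbound i
        _ = m * X := by simp [Finset.sum_const, nsmul_eq_mul]
    have hXV : X ≤ V := by
      simp only [hVdef]; have := hS0 H₂ hH₂; linarith
    calc (∑ i, A i * H' ^ (a i)) + S H' ≤ m * X + V := by rw [hSH']; linarith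
      _ ≤ m * V + V := by nlinarith [hXV, hX0, Nat.cast_nonneg (α := ℝ) m]
      _ ≤ (m + 2) * V := by nlinarith [hV0]
end
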